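/- Let G be the subgroup of bijections of X* generated by the Sierpiński carpet automaton generators a, b, c, d (each of which is an involution, so {a,b,c,d} is a symmetric generating set), with word length l relative to this generating set, and with sections g|_v defined by g(vw) = g(v)·(g|_v)(w) (equivalently, g|_v(w) is obtained from g(vw) by deleting its first |v| letters). Then the critical exponent of G satisfies inf{p ∈ (0,∞) : ∃n ≥ 1, η_{p,n} < 1} ≥ log 6 / log 3, where η_{p,n} is the limsup of (Σ_{v∈X^n} l(g|_v)^p)^{1/p}/l(g) as l(g) → ∞. (Lower bound p_c(G) ≥ log 6/log 3 derived in Section 6.3 of the paper from the relation T_p([ac]) = 2·3^{1−p}[ac].) -/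

import Mathlib

open Filter Topology
open scoped ENNReal NNReal

/-- Output permutation of the generator `a` of the Sierpiński carpet group:
`(1 2)(6 7)` on the labels `1,…,8`, i.e. on `Fin 8` (0-based). -/
def sigmaA : Fin 8 → Fin 8 := ![1, 0, 2, 3, 4, 6, 5, 7]

/-- Output permutation of `b`: `(4 6)(5 8)` on the labels `1,…,8`. -/
def sigmaB : Fin 8 → Fin 8 := ![0, 1, 2, 5, 7, 3, 6, 4]

/-- Output permutation of `c`: `(2 3)(7 8)` on the labels `1,…,8`. -/
def sigmaC : Fin 8 → Fin 8 := ![0, 2, 1, 3, 4, 5, 7, 6]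

/-- Output permutation of `d`: `(1 4)(3 5)` on the labels `1,…,8`. -/
def sigmaD : Fin 8 → Fin 8 := ![3, 1, 4, 0, 2, 5, 6, 7]

/-- The generator `a = (12)(67)(1,1,a,1,a,1,1,a)` of the Sierpiński carpet group, acting on
finite words over the labels `1,…,8` (encoded as `Fin 8`, 0-based): the sections at the
letters `3, 5, 8` equal `a`, the others are trivial. -/
def aFun : List (Fin 8) → List (Fin 8)
  | [] => []
  | x :: w => sigmaA x :: (if x = 2 ∨ x = 4 ∨ x = 7 then aFun w else w)

/-- The generator `b = (46)(58)(b,b,b,1,1,1,1,1)`. -/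
def bFun : List (Fin 8) → List (Fin 8)
  | [] => []
  | x :: w => sigmaB x :: (if x = 0 ∨ x = 1 ∨ x = 2 then bFun w else w)

/-- The generator `c = (23)(78)(c,1,1,c,1,c,1,1)`. -/
def cFun : List (Fin 8) → List (Fin 8)
  | [] => []
  | x :: w => sigmaC x :: (if x = 0 ∨ x = 3 ∨ x = 5 then cFun w else w)

/-- The generator `d = (14)(35)(1,1,1,1,1,d,d,d)`. -/
def dFun : List (Fin 8) → List (Fin 8)
  | [] => []
  | x :: w => sigmaD x :: (if x = 5 ∨ x = 6 ∨ x = 7 then dFun w else w)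

/-- The generating set `{a, b, c, d}` of the Sierpiński carpet group (each generator is an
involution, so this set is symmetric). -/
def carpetGens : Set (List (Fin 8) → List (Fin 8)) := {aFun, bFun, cFun, dFun}

/-- The Sierpiński carpet group: the set of bijections of `X*` that are finite composites of
the generators (since the generators are involutions, this is the subgroup they generate). -/
def carpetGroup : Set (List (Fin 8) → List (Fin 8)) :=
  {f | ∃ w : List (List (Fin 8) → List (Fin 8)),
    (∀ s ∈ w, s ∈ carpetGens) ∧ w.foldr (· ∘ ·) id = f}

/-- Word length with respect to the generating set `{a, b, c, d}`. -/
noncomputable def carpetLength (f : List (Fin 8) → List (Fin 8)) : ℕ :=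
  sInf {n | ∃ w : List (List (Fin 8) → List (Fin 8)),
    (∀ s ∈ w, s ∈ carpetGens) ∧ w.length = n ∧ w.foldr (· ∘ ·) id = f}

/-- The section `g|_v` of a (length- and prefix-preserving) bijection `g` of `X*` at the
word `v`: `g|_v(w)` is obtained from `g(v ++ w)` by deleting the first `|v|` letters. -/
def carpetSec (f : List (Fin 8) → List (Fin 8)) (v : List (Fin 8)) :
    List (Fin 8) → List (Fin 8) :=
  fun w => (f (v ++ w)).drop v.length

/-- The contraction coefficient `η_{p,n}` of the Sierpiński carpet group: the limsup of
`(Σ_{v∈X^n} l(g|_v)^p)^{1/p} / l(g)` over `g` in the group, as `l(g) → ∞`. -/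
noncomputable def carpetEta (p : ℝ) (n : ℕ) : ℝ≥0∞ :=
  Filter.limsup
    (fun g : carpetGroup =>
      (∑ v : Fin n → Fin 8, (carpetLength (carpetSec g.1 (List.ofFn v)) : ℝ≥0∞) ^ p) ^ (1 / p)
        / (carpetLength g.1 : ℝ≥0∞))
    (Filter.comap (fun g : carpetGroup => carpetLength g.1) Filter.atTop)

-- ====== auxiliary development ======

inductive Gen | A | B | C | D
deriving DecidableEq

instance : Fintype Gen := ⟨⟨{.A, .B, .C, .D}, by decide⟩, by intro x; cases x <;> decide⟩

abbrev F8 := List (Fin 8) → List (Fin 8)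

def Gen.tf : Gen → F8
  | .A => aFun | .B => bFun | .C => cFun | .D => dFun

def Gen.prm : Gen → Fin 8 → Fin 8
  | .A => sigmaA | .B => sigmaB | .C => sigmaC | .D => sigmaD

def Gen.act : Gen → Fin 8 → Bool
  | .A => ![false, false, true, false, true, false, false, true]
  | .B => ![true, true, true, false, false, false, false, false]
  | .C => ![true, false, false, true, false, true, false, false]
  | .D => ![false, false, false, false, false, true, true, true]

lemma tf_nil (g : Gen) : g.tf [] = [] := by cases g <;> rfl

lemma tf_cons (g : Gen) (x : Fin 8) (w : List (Fin 8)) :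
    g.tf (x :: w) = g.prm x :: (if g.act x then g.tf w else w) := by
  cases g <;> fin_cases x <;> simp [Gen.tf, Gen.prm, Gen.act, aFun, bFun, cFun, dFun] <;> rfl

lemma prm_prm (g : Gen) (x : Fin 8) : g.prm (g.prm x) = x := by
  revert g x; decide

lemma act_prm (g : Gen) (x : Fin 8) : g.act (g.prm x) = g.act x := by
  revert g x; decide

lemma prm_of_act (g : Gen) (x : Fin 8) (h : g.act x = true) : g.prm x = x := by
  revert g x; decide

lemma tf_tf (g : Gen) : ∀ w, g.tf (g.tf w) = w := by
  intro w
  induction w with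
  | nil => rw [tf_nil, tf_nil]
  | cons x w ih =>
    rw [tf_cons]
    by_cases h : g.act x = true
    · rw [if_pos h, tf_cons, prm_prm, act_prm, if_pos h, ih]
    · rw [if_neg h, tf_cons, prm_prm, act_prm, if_neg h]

def val : List Gen → F8
  | [] => id
  | g :: w => g.tf ∘ val w

lemma val_nil : val [] = id := rfl
lemma val_cons (g : Gen) (w : List Gen) : val (g :: w) = g.tf ∘ val w := rfl

lemma val_append (u v : List Gen) : val (u ++ v) = val u ∘ val v := by
  induction u with
  | nil => rfl
  | cons g u ih => simp [val_cons, ih, Function.comp_assoc]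

lemma val_nil_list (w : List Gen) : val w [] = [] := by
  induction w with
  | nil => rfl
  | cons g w ih => simp [val_cons, ih, tf_nil]

def permW : List Gen → Fin 8 → Fin 8
  | [], x => x
  | g :: w, x => g.prm (permW w x)

def secW : List Gen → Fin 8 → List Gen
  | [], _ => []
  | g :: w, x => (if g.act (permW w x) then [g] else []) ++ secW w x

lemma secW_length_le (w : List Gen) (x : Fin 8) : (secW w x).length ≤ w.length := by
  induction w with
  | nil => simp [secW]
  | cons g w ih =>
    by_cases h : g.act (permW w x) = true <;>
      simp [secW, h] <;> omega

lemma val_cons_letter (w : List Gen) (x : Fin 8) (ω : List (Fin 8)) :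
    val w (x :: ω) = permW w x :: val (secW w x) ω := by
  induction w with
  | nil => rfl
  | cons g w ih =>
    by_cases h : g.act (permW w x) = true
    · simp only [val_cons, Function.comp_apply, ih, tf_cons, h, if_pos, permW, secW]
      simp [h, val_cons]
    · simp only [val_cons, Function.comp_apply, ih, tf_cons, h, permW, secW]
      simp [h]

lemma permW_append (u v : List Gen) (x : Fin 8) :
    permW (u ++ v) x = permW u (permW v x) := by
  induction u with
  | nil => rfl
  | cons g u ih => simp [permW, ih]

lemma secW_append (u v : List Gen) (x : Fin 8) :
    secW (u ++ v) x = secW u (permW v x) ++ secW v x := by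
  induction u with
  | nil => rfl
  | cons g u ih => simp [secW, permW_append, ih]

-- group membership and length

lemma tf_mem_gens (g : Gen) : g.tf ∈ carpetGens := by
  cases g <;> simp [Gen.tf, carpetGens]

lemma val_eq_foldr (w : List Gen) : (w.map Gen.tf).foldr (· ∘ ·) id = val w := by
  induction w with
  | nil => rfl
  | cons g w ih => simp [val_cons, ih]

lemma val_mem_group (w : List Gen) : val w ∈ carpetGroup :=
  ⟨w.map Gen.tf, fun s hs => by
    obtain ⟨g, _, rfl⟩ := List.mem_map.1 hs; exact tf_mem_gens g, val_eq_foldr w⟩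

lemma carpetLength_le (w : List Gen) : carpetLength (val w) ≤ w.length :=
  Nat.sInf_le ⟨w.map Gen.tf, fun s hs => by
    obtain ⟨g, _, rfl⟩ := List.mem_map.1 hs; exact tf_mem_gens g,
    by simp, val_eq_foldr w⟩

lemma exists_gen_list (l : List F8) (h : ∀ s ∈ l, s ∈ carpetGens) :
    ∃ w : List Gen, w.map Gen.tf = l := by
  induction l with
  | nil => exact ⟨[], rfl⟩
  | cons s l ih =>
    obtain ⟨w, hw⟩ := ih (fun t ht => h t (List.mem_cons_of_mem _ ht))
    have hs := h s (List.mem_cons_self)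
    rcases hs with h1 | h1 | h1 | h1
    · exact ⟨.A :: w, by simp [hw, h1, Gen.tf]⟩
    · exact ⟨.B :: w, by simp [hw, h1, Gen.tf]⟩
    · exact ⟨.C :: w, by simp [hw, h1, Gen.tf]⟩
    · exact ⟨.D :: w, by simp [hw, Gen.tf]; exact h1.symm⟩

lemma exists_min_word {f : F8} (hf : f ∈ carpetGroup) :
    ∃ w : List Gen, val w = f ∧ w.length = carpetLength f := by
  have hne : {n | ∃ w : List F8,
      (∀ s ∈ w, s ∈ carpetGens) ∧ w.length = n ∧ w.foldr (· ∘ ·) id = f}.Nonempty := by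
    obtain ⟨w, hw1, hw2⟩ := hf
    exact ⟨w.length, w, hw1, rfl, hw2⟩
  have hmem := Nat.sInf_mem hne
  obtain ⟨l, hl1, hl2, hl3⟩ := hmem
  obtain ⟨w, hw⟩ := exists_gen_list l hl1
  refine ⟨w, ?_, ?_⟩
  · rw [← val_eq_foldr, hw, hl3]
  · unfold carpetLength
    rw [← hw, List.length_map] at hl2
    exact hl2

lemma carpetSec_letter (w : List Gen) (x : Fin 8) :
    carpetSec (val w) [x] = val (secW w x) := by
  funext ω
  simp [carpetSec, val_cons_letter]

-- finiteness of balls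
lemma ball_finite (m : ℕ) : {f : F8 | f ∈ carpetGroup ∧ carpetLength f < m}.Finite := by
  have h1 : {w : List Gen | w.length < m}.Finite := List.finite_length_lt Gen m
  refine Set.Finite.subset (h1.image val) ?_
  rintro f ⟨hf, hlt⟩
  obtain ⟨w, hw, hlen⟩ := exists_min_word hf
  exact ⟨w, by simp only [Set.mem_setOf_eq]; omega, hw⟩

lemma carpetLength_pos {f : F8} (hf : f ∈ carpetGroup) (hne : f ≠ id) :
    1 ≤ carpetLength f := by
  by_contra h
  push_neg at h
  interval_cases hc : carpetLength f
  obtain ⟨w, hw, hlen⟩ := exists_min_word hf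
  rw [hc] at hlen
  rw [List.length_eq_zero_iff] at hlen
  subst hlen
  exact hne hw.symm
def wAB : List Gen := [.A, .B, .A, .B, .A, .B, .A, .B, .A, .B, .A, .B]

def wBA : List Gen := [.B, .A, .B, .A, .B, .A, .B, .A, .B, .A, .B, .A]

def wAD : List Gen := [.A, .D, .A, .D, .A, .D, .A, .D, .A, .D, .A, .D]

def wDA : List Gen := [.D, .A, .D, .A, .D, .A, .D, .A, .D, .A, .D, .A]

def wBC : List Gen := [.B, .C, .B, .C, .B, .C, .B, .C, .B, .C, .B, .C]

def wCB : List Gen := [.C, .B, .C, .B, .C, .B, .C, .B, .C, .B, .C, .B]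

def wCD : List Gen := [.C, .D, .C, .D, .C, .D, .C, .D, .C, .D, .C, .D]

def wDC : List Gen := [.D, .C, .D, .C, .D, .C, .D, .C, .D, .C, .D, .C]

lemma val_wAB : ∀ ω, val wAB ω = ω := by
  intro ω
  induction ω with
  | nil => exact val_nil_list _
  | cons x ω ih =>
    rw [val_cons_letter]
    fin_cases x
    · show permW wAB 0 :: val (secW wAB 0) ω = (0:Fin 8) :: ω
      rw [show secW wAB 0 = [.B, .B, .B, .B, .B, .B] from by decide, show permW wAB 0 = (0:Fin 8) from by decide]
      simp [val_cons, val_nil, tf_tf]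
    · show permW wAB 1 :: val (secW wAB 1) ω = (1:Fin 8) :: ω
      rw [show secW wAB 1 = [.B, .B, .B, .B, .B, .B] from by decide, show permW wAB 1 = (1:Fin 8) from by decide]
      simp [val_cons, val_nil, tf_tf]
    · show permW wAB 2 :: val (secW wAB 2) ω = (2:Fin 8) :: ω
      rw [show secW wAB 2 = wAB from by decide, show permW wAB 2 = (2:Fin 8) from by decide]
      rw [ih]
    · show permW wAB 3 :: val (secW wAB 3) ω = (3:Fin 8) :: ω
      rw [show secW wAB 3 = [] from by decide, show permW wAB 3 = (3:Fin 8) from by decide]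
      simp [val_cons, val_nil, tf_tf]
    · show permW wAB 4 :: val (secW wAB 4) ω = (4:Fin 8) :: ω
      rw [show secW wAB 4 = [.A, .A, .A, .A, .A, .A] from by decide, show permW wAB 4 = (4:Fin 8) from by decide]
      simp [val_cons, val_nil, tf_tf]
    · show permW wAB 5 :: val (secW wAB 5) ω = (5:Fin 8) :: ω
      rw [show secW wAB 5 = [] from by decide, show permW wAB 5 = (5:Fin 8) from by decide]
      simp [val_cons, val_nil, tf_tf]
    · show permW wAB 6 :: val (secW wAB 6) ω = (6:Fin 8) :: ω
      rw [show secW wAB 6 = [] from by decide, show permW wAB 6 = (6:Fin 8) from by decide]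
      simp [val_cons, val_nil, tf_tf]
    · show permW wAB 7 :: val (secW wAB 7) ω = (7:Fin 8) :: ω
      rw [show secW wAB 7 = [.A, .A, .A, .A, .A, .A] from by decide, show permW wAB 7 = (7:Fin 8) from by decide]
      simp [val_cons, val_nil, tf_tf]

lemma val_wBA : ∀ ω, val wBA ω = ω := by
  intro ω
  induction ω with
  | nil => exact val_nil_list _
  | cons x ω ih =>
    rw [val_cons_letter]
    fin_cases x
    · show permW wBA 0 :: val (secW wBA 0) ω = (0:Fin 8) :: ω
      rw [show secW wBA 0 = [.B, .B, .B, .B, .B, .B] from by decide, show permW wBA 0 = (0:Fin 8) from by decide]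
      simp [val_cons, val_nil, tf_tf]
    · show permW wBA 1 :: val (secW wBA 1) ω = (1:Fin 8) :: ω
      rw [show secW wBA 1 = [.B, .B, .B, .B, .B, .B] from by decide, show permW wBA 1 = (1:Fin 8) from by decide]
      simp [val_cons, val_nil, tf_tf]
    · show permW wBA 2 :: val (secW wBA 2) ω = (2:Fin 8) :: ω
      rw [show secW wBA 2 = wBA from by decide, show permW wBA 2 = (2:Fin 8) from by decide]
      rw [ih]
    · show permW wBA 3 :: val (secW wBA 3) ω = (3:Fin 8) :: ω
      rw [show secW wBA 3 = [] from by decide, show permW wBA 3 = (3:Fin 8) from by decide]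
      simp [val_cons, val_nil, tf_tf]
    · show permW wBA 4 :: val (secW wBA 4) ω = (4:Fin 8) :: ω
      rw [show secW wBA 4 = [.A, .A, .A, .A, .A, .A] from by decide, show permW wBA 4 = (4:Fin 8) from by decide]
      simp [val_cons, val_nil, tf_tf]
    · show permW wBA 5 :: val (secW wBA 5) ω = (5:Fin 8) :: ω
      rw [show secW wBA 5 = [] from by decide, show permW wBA 5 = (5:Fin 8) from by decide]
      simp [val_cons, val_nil, tf_tf]
    · show permW wBA 6 :: val (secW wBA 6) ω = (6:Fin 8) :: ω
      rw [show secW wBA 6 = [] from by decide, show permW wBA 6 = (6:Fin 8) from by decide]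
      simp [val_cons, val_nil, tf_tf]
    · show permW wBA 7 :: val (secW wBA 7) ω = (7:Fin 8) :: ω
      rw [show secW wBA 7 = [.A, .A, .A, .A, .A, .A] from by decide, show permW wBA 7 = (7:Fin 8) from by decide]
      simp [val_cons, val_nil, tf_tf]

lemma val_wAD : ∀ ω, val wAD ω = ω := by
  intro ω
  induction ω with
  | nil => exact val_nil_list _
  | cons x ω ih =>
    rw [val_cons_letter]
    fin_cases x
    · show permW wAD 0 :: val (secW wAD 0) ω = (0:Fin 8) :: ω
      rw [show secW wAD 0 = [] from by decide, show permW wAD 0 = (0:Fin 8) from by decide]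
      simp [val_cons, val_nil, tf_tf]
    · show permW wAD 1 :: val (secW wAD 1) ω = (1:Fin 8) :: ω
      rw [show secW wAD 1 = [] from by decide, show permW wAD 1 = (1:Fin 8) from by decide]
      simp [val_cons, val_nil, tf_tf]
    · show permW wAD 2 :: val (secW wAD 2) ω = (2:Fin 8) :: ω
      rw [show secW wAD 2 = [.A, .A, .A, .A, .A, .A] from by decide, show permW wAD 2 = (2:Fin 8) from by decide]
      simp [val_cons, val_nil, tf_tf]
    · show permW wAD 3 :: val (secW wAD 3) ω = (3:Fin 8) :: ω
      rw [show secW wAD 3 = [] from by decide, show permW wAD 3 = (3:Fin 8) from by decide]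
      simp [val_cons, val_nil, tf_tf]
    · show permW wAD 4 :: val (secW wAD 4) ω = (4:Fin 8) :: ω
      rw [show secW wAD 4 = [.A, .A, .A, .A, .A, .A] from by decide, show permW wAD 4 = (4:Fin 8) from by decide]
      simp [val_cons, val_nil, tf_tf]
    · show permW wAD 5 :: val (secW wAD 5) ω = (5:Fin 8) :: ω
      rw [show secW wAD 5 = [.D, .D, .D, .D, .D, .D] from by decide, show permW wAD 5 = (5:Fin 8) from by decide]
      simp [val_cons, val_nil, tf_tf]
    · show permW wAD 6 :: val (secW wAD 6) ω = (6:Fin 8) :: ω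
      rw [show secW wAD 6 = [.D, .D, .D, .D, .D, .D] from by decide, show permW wAD 6 = (6:Fin 8) from by decide]
      simp [val_cons, val_nil, tf_tf]
    · show permW wAD 7 :: val (secW wAD 7) ω = (7:Fin 8) :: ω
      rw [show secW wAD 7 = wAD from by decide, show permW wAD 7 = (7:Fin 8) from by decide]
      rw [ih]

lemma val_wDA : ∀ ω, val wDA ω = ω := by
  intro ω
  induction ω with
  | nil => exact val_nil_list _
  | cons x ω ih =>
    rw [val_cons_letter]
    fin_cases x
    · show permW wDA 0 :: val (secW wDA 0) ω = (0:Fin 8) :: ω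
      rw [show secW wDA 0 = [] from by decide, show permW wDA 0 = (0:Fin 8) from by decide]
      simp [val_cons, val_nil, tf_tf]
    · show permW wDA 1 :: val (secW wDA 1) ω = (1:Fin 8) :: ω
      rw [show secW wDA 1 = [] from by decide, show permW wDA 1 = (1:Fin 8) from by decide]
      simp [val_cons, val_nil, tf_tf]
    · show permW wDA 2 :: val (secW wDA 2) ω = (2:Fin 8) :: ω
      rw [show secW wDA 2 = [.A, .A, .A, .A, .A, .A] from by decide, show permW wDA 2 = (2:Fin 8) from by decide]
      simp [val_cons, val_nil, tf_tf]
    · show permW wDA 3 :: val (secW wDA 3) ω = (3:Fin 8) :: ω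
      rw [show secW wDA 3 = [] from by decide, show permW wDA 3 = (3:Fin 8) from by decide]
      simp [val_cons, val_nil, tf_tf]
    · show permW wDA 4 :: val (secW wDA 4) ω = (4:Fin 8) :: ω
      rw [show secW wDA 4 = [.A, .A, .A, .A, .A, .A] from by decide, show permW wDA 4 = (4:Fin 8) from by decide]
      simp [val_cons, val_nil, tf_tf]
    · show permW wDA 5 :: val (secW wDA 5) ω = (5:Fin 8) :: ω
      rw [show secW wDA 5 = [.D, .D, .D, .D, .D, .D] from by decide, show permW wDA 5 = (5:Fin 8) from by decide]
      simp [val_cons, val_nil, tf_tf]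
    · show permW wDA 6 :: val (secW wDA 6) ω = (6:Fin 8) :: ω
      rw [show secW wDA 6 = [.D, .D, .D, .D, .D, .D] from by decide, show permW wDA 6 = (6:Fin 8) from by decide]
      simp [val_cons, val_nil, tf_tf]
    · show permW wDA 7 :: val (secW wDA 7) ω = (7:Fin 8) :: ω
      rw [show secW wDA 7 = wDA from by decide, show permW wDA 7 = (7:Fin 8) from by decide]
      rw [ih]

lemma val_wBC : ∀ ω, val wBC ω = ω := by
  intro ω
  induction ω with
  | nil => exact val_nil_list _
  | cons x ω ih =>
    rw [val_cons_letter]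
    fin_cases x
    · show permW wBC 0 :: val (secW wBC 0) ω = (0:Fin 8) :: ω
      rw [show secW wBC 0 = wBC from by decide, show permW wBC 0 = (0:Fin 8) from by decide]
      rw [ih]
    · show permW wBC 1 :: val (secW wBC 1) ω = (1:Fin 8) :: ω
      rw [show secW wBC 1 = [.B, .B, .B, .B, .B, .B] from by decide, show permW wBC 1 = (1:Fin 8) from by decide]
      simp [val_cons, val_nil, tf_tf]
    · show permW wBC 2 :: val (secW wBC 2) ω = (2:Fin 8) :: ω
      rw [show secW wBC 2 = [.B, .B, .B, .B, .B, .B] from by decide, show permW wBC 2 = (2:Fin 8) from by decide]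
      simp [val_cons, val_nil, tf_tf]
    · show permW wBC 3 :: val (secW wBC 3) ω = (3:Fin 8) :: ω
      rw [show secW wBC 3 = [.C, .C, .C, .C, .C, .C] from by decide, show permW wBC 3 = (3:Fin 8) from by decide]
      simp [val_cons, val_nil, tf_tf]
    · show permW wBC 4 :: val (secW wBC 4) ω = (4:Fin 8) :: ω
      rw [show secW wBC 4 = [] from by decide, show permW wBC 4 = (4:Fin 8) from by decide]
      simp [val_cons, val_nil, tf_tf]
    · show permW wBC 5 :: val (secW wBC 5) ω = (5:Fin 8) :: ω
      rw [show secW wBC 5 = [.C, .C, .C, .C, .C, .C] from by decide, show permW wBC 5 = (5:Fin 8) from by decide]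
      simp [val_cons, val_nil, tf_tf]
    · show permW wBC 6 :: val (secW wBC 6) ω = (6:Fin 8) :: ω
      rw [show secW wBC 6 = [] from by decide, show permW wBC 6 = (6:Fin 8) from by decide]
      simp [val_cons, val_nil, tf_tf]
    · show permW wBC 7 :: val (secW wBC 7) ω = (7:Fin 8) :: ω
      rw [show secW wBC 7 = [] from by decide, show permW wBC 7 = (7:Fin 8) from by decide]
      simp [val_cons, val_nil, tf_tf]

lemma val_wCB : ∀ ω, val wCB ω = ω := by
  intro ω
  induction ω with
  | nil => exact val_nil_list _
  | cons x ω ih =>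
    rw [val_cons_letter]
    fin_cases x
    · show permW wCB 0 :: val (secW wCB 0) ω = (0:Fin 8) :: ω
      rw [show secW wCB 0 = wCB from by decide, show permW wCB 0 = (0:Fin 8) from by decide]
      rw [ih]
    · show permW wCB 1 :: val (secW wCB 1) ω = (1:Fin 8) :: ω
      rw [show secW wCB 1 = [.B, .B, .B, .B, .B, .B] from by decide, show permW wCB 1 = (1:Fin 8) from by decide]
      simp [val_cons, val_nil, tf_tf]
    · show permW wCB 2 :: val (secW wCB 2) ω = (2:Fin 8) :: ω
      rw [show secW wCB 2 = [.B, .B, .B, .B, .B, .B] from by decide, show permW wCB 2 = (2:Fin 8) from by decide]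
      simp [val_cons, val_nil, tf_tf]
    · show permW wCB 3 :: val (secW wCB 3) ω = (3:Fin 8) :: ω
      rw [show secW wCB 3 = [.C, .C, .C, .C, .C, .C] from by decide, show permW wCB 3 = (3:Fin 8) from by decide]
      simp [val_cons, val_nil, tf_tf]
    · show permW wCB 4 :: val (secW wCB 4) ω = (4:Fin 8) :: ω
      rw [show secW wCB 4 = [] from by decide, show permW wCB 4 = (4:Fin 8) from by decide]
      simp [val_cons, val_nil, tf_tf]
    · show permW wCB 5 :: val (secW wCB 5) ω = (5:Fin 8) :: ω
      rw [show secW wCB 5 = [.C, .C, .C, .C, .C, .C] from by decide, show permW wCB 5 = (5:Fin 8) from by decide]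
      simp [val_cons, val_nil, tf_tf]
    · show permW wCB 6 :: val (secW wCB 6) ω = (6:Fin 8) :: ω
      rw [show secW wCB 6 = [] from by decide, show permW wCB 6 = (6:Fin 8) from by decide]
      simp [val_cons, val_nil, tf_tf]
    · show permW wCB 7 :: val (secW wCB 7) ω = (7:Fin 8) :: ω
      rw [show secW wCB 7 = [] from by decide, show permW wCB 7 = (7:Fin 8) from by decide]
      simp [val_cons, val_nil, tf_tf]

lemma val_wCD : ∀ ω, val wCD ω = ω := by
  intro ω
  induction ω with
  | nil => exact val_nil_list _
  | cons x ω ih =>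
    rw [val_cons_letter]
    fin_cases x
    · show permW wCD 0 :: val (secW wCD 0) ω = (0:Fin 8) :: ω
      rw [show secW wCD 0 = [.C, .C, .C, .C, .C, .C] from by decide, show permW wCD 0 = (0:Fin 8) from by decide]
      simp [val_cons, val_nil, tf_tf]
    · show permW wCD 1 :: val (secW wCD 1) ω = (1:Fin 8) :: ω
      rw [show secW wCD 1 = [] from by decide, show permW wCD 1 = (1:Fin 8) from by decide]
      simp [val_cons, val_nil, tf_tf]
    · show permW wCD 2 :: val (secW wCD 2) ω = (2:Fin 8) :: ω
      rw [show secW wCD 2 = [] from by decide, show permW wCD 2 = (2:Fin 8) from by decide]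
      simp [val_cons, val_nil, tf_tf]
    · show permW wCD 3 :: val (secW wCD 3) ω = (3:Fin 8) :: ω
      rw [show secW wCD 3 = [.C, .C, .C, .C, .C, .C] from by decide, show permW wCD 3 = (3:Fin 8) from by decide]
      simp [val_cons, val_nil, tf_tf]
    · show permW wCD 4 :: val (secW wCD 4) ω = (4:Fin 8) :: ω
      rw [show secW wCD 4 = [] from by decide, show permW wCD 4 = (4:Fin 8) from by decide]
      simp [val_cons, val_nil, tf_tf]
    · show permW wCD 5 :: val (secW wCD 5) ω = (5:Fin 8) :: ω
      rw [show secW wCD 5 = wCD from by decide, show permW wCD 5 = (5:Fin 8) from by decide]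
      rw [ih]
    · show permW wCD 6 :: val (secW wCD 6) ω = (6:Fin 8) :: ω
      rw [show secW wCD 6 = [.D, .D, .D, .D, .D, .D] from by decide, show permW wCD 6 = (6:Fin 8) from by decide]
      simp [val_cons, val_nil, tf_tf]
    · show permW wCD 7 :: val (secW wCD 7) ω = (7:Fin 8) :: ω
      rw [show secW wCD 7 = [.D, .D, .D, .D, .D, .D] from by decide, show permW wCD 7 = (7:Fin 8) from by decide]
      simp [val_cons, val_nil, tf_tf]

lemma val_wDC : ∀ ω, val wDC ω = ω := by
  intro ω
  induction ω with
  | nil => exact val_nil_list _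
  | cons x ω ih =>
    rw [val_cons_letter]
    fin_cases x
    · show permW wDC 0 :: val (secW wDC 0) ω = (0:Fin 8) :: ω
      rw [show secW wDC 0 = [.C, .C, .C, .C, .C, .C] from by decide, show permW wDC 0 = (0:Fin 8) from by decide]
      simp [val_cons, val_nil, tf_tf]
    · show permW wDC 1 :: val (secW wDC 1) ω = (1:Fin 8) :: ω
      rw [show secW wDC 1 = [] from by decide, show permW wDC 1 = (1:Fin 8) from by decide]
      simp [val_cons, val_nil, tf_tf]
    · show permW wDC 2 :: val (secW wDC 2) ω = (2:Fin 8) :: ω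
      rw [show secW wDC 2 = [] from by decide, show permW wDC 2 = (2:Fin 8) from by decide]
      simp [val_cons, val_nil, tf_tf]
    · show permW wDC 3 :: val (secW wDC 3) ω = (3:Fin 8) :: ω
      rw [show secW wDC 3 = [.C, .C, .C, .C, .C, .C] from by decide, show permW wDC 3 = (3:Fin 8) from by decide]
      simp [val_cons, val_nil, tf_tf]
    · show permW wDC 4 :: val (secW wDC 4) ω = (4:Fin 8) :: ω
      rw [show secW wDC 4 = [] from by decide, show permW wDC 4 = (4:Fin 8) from by decide]
      simp [val_cons, val_nil, tf_tf]
    · show permW wDC 5 :: val (secW wDC 5) ω = (5:Fin 8) :: ω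
      rw [show secW wDC 5 = wDC from by decide, show permW wDC 5 = (5:Fin 8) from by decide]
      rw [ih]
    · show permW wDC 6 :: val (secW wDC 6) ω = (6:Fin 8) :: ω
      rw [show secW wDC 6 = [.D, .D, .D, .D, .D, .D] from by decide, show permW wDC 6 = (6:Fin 8) from by decide]
      simp [val_cons, val_nil, tf_tf]
    · show permW wDC 7 :: val (secW wDC 7) ω = (7:Fin 8) :: ω
      rw [show secW wDC 7 = [.D, .D, .D, .D, .D, .D] from by decide, show permW wDC 7 = (7:Fin 8) from by decide]
      simp [val_cons, val_nil, tf_tf]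

-- ===== reduction machinery =====

def altW : Gen → Gen → ℕ → List Gen
  | _, _, 0 => []
  | s, t, n+1 => s :: altW t s n

lemma exists_adj_dup : ∀ {u : List Gen}, ¬ u.Chain' (· ≠ ·) →
    ∃ p g q, u = p ++ g :: g :: q := by
  intro u
  induction u with
  | nil => intro h; exact absurd List.isChain_nil h
  | cons a rest ih =>
    intro h
    cases rest with
    | nil => exact absurd (List.isChain_singleton a) h
    | cons b r =>
      by_cases hab : a = b
      · exact ⟨[], a, r, by rw [hab]; rfl⟩
      · have : ¬ (b :: r).Chain' (· ≠ ·) := by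
          intro hc
          exact h (List.isChain_cons_cons.2 ⟨hab, hc⟩)
        obtain ⟨p, g, q, hpq⟩ := ih this
        exact ⟨a :: p, g, q, by rw [hpq]; rfl⟩

lemma alt_eq : ∀ (n : ℕ) (s t : Gen), s ≠ t → ∀ (u : List Gen), u.length = n →
    (∀ g ∈ u, g = s ∨ g = t) → u.Chain' (· ≠ ·) →
    u = altW s t n ∨ u = altW t s n := by
  intro n
  induction n with
  | zero =>
    intro s t _ u hlen _ _
    rw [List.length_eq_zero_iff] at hlen
    subst hlen; left; rfl
  | succ n ih =>
    intro s t hst u hlen hmem hch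
    cases u with
    | nil => simp at hlen
    | cons g rest =>
      have hrlen : rest.length = n := by simpa using hlen
      have hrmem : ∀ g' ∈ rest, g' = s ∨ g' = t :=
        fun g' hg' => hmem g' (List.mem_cons_of_mem _ hg')
      have hrch : rest.Chain' (· ≠ ·) := hch.tail
      have hg := hmem g (List.mem_cons_self)
      rcases ih s t hst rest hrlen hrmem hrch with hr | hr
      · cases n with
        | zero =>
          rw [List.length_eq_zero_iff] at hrlen
          subst hrlen
          rcases hg with rfl | rfl
          · left; rfl
          · right; rfl
        | succ m =>
          -- rest = altW s t (m+1) = s :: altW t s m, so g ≠ s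
          have hne : g ≠ s := by
            rw [hr] at hch
            exact (List.isChain_cons_cons.1 hch).1
          rcases hg with rfl | rfl
          · exact absurd rfl hne
          · right; rw [hr]; rfl
      · cases n with
        | zero =>
          rw [List.length_eq_zero_iff] at hrlen
          subst hrlen
          rcases hg with rfl | rfl
          · left; rfl
          · right; rfl
        | succ m =>
          have hne : g ≠ t := by
            rw [hr] at hch
            exact (List.isChain_cons_cons.1 hch).1
          rcases hg with rfl | rfl
          · left; rw [hr]; rfl
          · exact absurd rfl hne

lemma secW_all_active : ∀ (u : List Gen) (y : Fin 8),
    (secW u y).length = u.length → (∀ g ∈ u, g.act y = true) ∧ permW u y = y := by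
  intro u
  induction u with
  | nil => intro y _; exact ⟨by simp, rfl⟩
  | cons g r ih =>
    intro y h
    by_cases hact : g.act (permW r y) = true
    · simp only [secW, hact, if_pos, List.singleton_append, List.length_cons] at h
      have hr := ih y (by omega)
      have hpy : permW r y = y := hr.2
      rw [hpy] at hact
      refine ⟨?_, ?_⟩
      · intro g' hg'
        rcases List.mem_cons.1 hg' with rfl | hg'
        · exact hact
        · exact hr.1 g' hg'
      · show g.prm (permW r y) = y
        rw [hpy, prm_of_act g y hact]
    · have hs : secW (g :: r) y = secW r y := by simp [secW, hact]
      rw [hs, List.length_cons] at h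
      have := secW_length_le r y
      omega

lemma act_pair : ∀ (y : Fin 8), ∃ s t : Gen, s ≠ t ∧
    (∀ g : Gen, g.act y = true → g = s ∨ g = t) ∧
    (val (altW s t 12) = val ([] : List Gen) ∧ val (altW t s 12) = val ([] : List Gen)
      ∨ s.act y = false ∨ t.act y = false) := by
  intro y
  fin_cases y
  · exact ⟨.B, .C, by decide, by decide,
      Or.inl ⟨funext fun ω => (val_wBC ω).trans rfl, funext fun ω => (val_wCB ω).trans rfl⟩⟩
  · exact ⟨.B, .C, by decide, by decide, Or.inr (Or.inr (by decide))⟩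
  · exact ⟨.A, .B, by decide, by decide,
      Or.inl ⟨funext fun ω => (val_wAB ω).trans rfl, funext fun ω => (val_wBA ω).trans rfl⟩⟩
  · exact ⟨.C, .D, by decide, by decide, Or.inr (Or.inr (by decide))⟩
  · exact ⟨.A, .B, by decide, by decide, Or.inr (Or.inr (by decide))⟩
  · exact ⟨.C, .D, by decide, by decide,
      Or.inl ⟨funext fun ω => (val_wCD ω).trans rfl, funext fun ω => (val_wDC ω).trans rfl⟩⟩
  · exact ⟨.C, .D, by decide, by decide, Or.inr (Or.inl (by decide))⟩
  · exact ⟨.A, .D, by decide, by decide,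
      Or.inl ⟨funext fun ω => (val_wAD ω).trans rfl, funext fun ω => (val_wDA ω).trans rfl⟩⟩

lemma val_adj_dup (p q : List Gen) (g : Gen) :
    val (p ++ g :: g :: q) = val (p ++ q) := by
  rw [val_append, val_append]
  have : val (g :: g :: q) = val q := by
    funext ω
    simp [val_cons, tf_tf]
  rw [this]

lemma twelve_reducible (u : List Gen) (y : Fin 8) (hlen : u.length = 12)
    (hact : ∀ g ∈ u, g.act y = true) :
    ∃ u', u'.length < u.length ∧ val u' = val u := by
  by_cases hch : u.Chain' (· ≠ ·)
  · obtain ⟨s, t, hst, hcl, hval⟩ := act_pair y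
    have hmem : ∀ g ∈ u, g = s ∨ g = t := fun g hg => hcl g (hact g hg)
    rcases hval with ⟨hv1, hv2⟩ | hbad | hbad
    · rcases alt_eq 12 s t hst u hlen hmem hch with rfl | rfl
      · exact ⟨[], by simp [hlen], by rw [hv1]⟩
      · exact ⟨[], by simp [hlen], by rw [hv2]⟩
    · -- s is inactive at y: then all letters are t, contradiction with chain'
      exfalso
      match u, hlen with
      | g1 :: g2 :: r, _ =>
        have h1 := hmem g1 (by simp)
        have h2 := hmem g2 (by simp)
        have a1 := hact g1 (by simp)
        have a2 := hact g2 (by simp)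
        have e1 : g1 = t := by
          cases h1 with
          | inr h => exact h
          | inl h => rw [h, hbad] at a1; simp at a1
        have e2 : g2 = t := by
          cases h2 with
          | inr h => exact h
          | inl h => rw [h, hbad] at a2; simp at a2
        have := (List.isChain_cons_cons.1 hch).1
        rw [e1, e2] at this
        exact this rfl
    · exfalso
      match u, hlen with
      | g1 :: g2 :: r, _ =>
        have h1 := hmem g1 (by simp)
        have h2 := hmem g2 (by simp)
        have a1 := hact g1 (by simp)
        have a2 := hact g2 (by simp)
        have e1 : g1 = s := by
          cases h1 with
          | inl h => exact h
          | inr h => rw [h, hbad] at a1; simp at a1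
        have e2 : g2 = s := by
          cases h2 with
          | inl h => exact h
          | inr h => rw [h, hbad] at a2; simp at a2
        have := (List.isChain_cons_cons.1 hch).1
        rw [e1, e2] at this
        exact this rfl
  · obtain ⟨p, g, q, rfl⟩ := exists_adj_dup hch
    exact ⟨p ++ q, by simp, (val_adj_dup p q g).symm⟩

-- minimal words
def MinWord (w : List Gen) : Prop := ∀ u : List Gen, val u = val w → w.length ≤ u.length

lemma minword_chunk (w : List Gen) (hmin : MinWord w) :
    ∀ p u q, w = p ++ u ++ q → u.length = 12 → ∀ y, (secW u y).length ≤ 11 := by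
  rintro p u q rfl hlen y
  by_contra h
  push_neg at h
  have hle := secW_length_le u y
  have heq : (secW u y).length = u.length := by omega
  obtain ⟨hact, _⟩ := secW_all_active u y heq
  obtain ⟨u', hu'len, hu'val⟩ := twelve_reducible u y hlen hact
  have hval : val (p ++ u' ++ q) = val (p ++ u ++ q) := by
    rw [val_append, val_append, val_append, val_append, hu'val]
  have := hmin _ hval
  simp only [List.length_append] at this
  omega

lemma count_bound : ∀ (n : ℕ) (w : List Gen), w.length ≤ n →
    (∀ p u q, w = p ++ u ++ q → u.length = 12 → ∀ y, (secW u y).length ≤ 11) →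
    ∀ x, 12 * (secW w x).length ≤ 11 * w.length + 12 := by
  intro n
  induction n with
  | zero =>
    intro w hw _ x
    have := secW_length_le w x
    omega
  | succ n ih =>
    intro w hw hsub x
    by_cases hsmall : w.length ≤ 12
    · have := secW_length_le w x
      omega
    · push_neg at hsmall
      set u := w.take 12 with hu
      set v := w.drop 12 with hv
      have hw' : w = u ++ v := (List.take_append_drop 12 w).symm
      have hulen : u.length = 12 := by
        rw [hu, List.length_take]; omega
      have hvlen : v.length = w.length - 12 := by
        rw [hv, List.length_drop]
      have hsec : secW w x = secW u (permW v x) ++ secW v x := by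
        rw [hw', secW_append]
      have h1 : (secW u (permW v x)).length ≤ 11 :=
        hsub [] u v (by rw [hw']; rfl) hulen _
      have h2 := ih v (by omega) ?_ x
      · rw [hsec, List.length_append]
        omega
      · intro p u' q hsplit hlen y
        exact hsub (u ++ p) u' q (by rw [hw', hsplit]; simp [List.append_assoc]) hlen y


lemma sec_len_bound {f : F8} (hf : f ∈ carpetGroup) (x : Fin 8) :
    12 * carpetLength (carpetSec f [x]) ≤ 11 * carpetLength f + 12 := by
  obtain ⟨w, hw, hlen⟩ := exists_min_word hf
  have hmin : MinWord w := by
    intro u hu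
    have h2 := carpetLength_le u
    rw [hu, hw] at h2
    omega
  have hcount := count_bound w.length w le_rfl (minword_chunk w hmin) x
  have hsec : carpetSec f [x] = val (secW w x) := by
    rw [← hw, carpetSec_letter]
  have h3 : carpetLength (carpetSec f [x]) ≤ (secW w x).length := by
    rw [hsec]; exact carpetLength_le _
  omega

lemma upper_real (L : ℝ) (hL : 132 ≤ L) (S : ℝ) (hS0 : 0 ≤ S)
    (hS : S ≤ 8 * ((11 * L + 12) / 12) ^ (48 : ℕ)) :
    S ^ ((48 : ℝ)⁻¹) / L ≤ 49 / 50 := by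
  have hL0 : (0:ℝ) < L := by linarith
  rw [div_le_iff₀ hL0]
  have hm0 : (0:ℝ) ≤ (11 * L + 12) / 12 := by linarith
  have h1 : (11 * L + 12) / 12 ≤ 61 * L / 66 := by linarith
  have h2 : S ≤ 8 * (61 * L / 66) ^ (48:ℕ) := by
    refine hS.trans ?_
    gcongr
  have hc : (8:ℝ) * (61 / 66) ^ (48:ℕ) ≤ (49 / 50) ^ (48:ℕ) := by norm_num
  have h3 : (8:ℝ) * (61 * L / 66) ^ (48:ℕ) ≤ (49 / 50 * L) ^ (48:ℕ) := by
    have e1 : (61 * L / 66) ^ (48:ℕ) = (61 / 66) ^ (48:ℕ) * L ^ (48:ℕ) := by ring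
    have e2 : (49 / 50 * L) ^ (48:ℕ) = (49 / 50) ^ (48:ℕ) * L ^ (48:ℕ) := by ring
    rw [e1, e2, ← mul_assoc]
    have hL48 : (0:ℝ) ≤ L ^ (48:ℕ) := by positivity
    exact mul_le_mul_of_nonneg_right hc hL48
  have h4 : S ≤ (49 / 50 * L) ^ (48:ℕ) := by linarith
  have h5 : S ^ ((48:ℝ)⁻¹) ≤ ((49 / 50 * L) ^ (48:ℕ)) ^ ((48:ℝ)⁻¹) :=
    Real.rpow_le_rpow hS0 h4 (by norm_num)
  have h6 : ((49 / 50 * L) ^ (48:ℕ)) ^ ((48:ℝ)⁻¹) = 49 / 50 * L :=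
    Real.pow_rpow_inv_natCast (by positivity) (by norm_num)
  rw [h6] at h5
  exact h5

lemma eta48_le : carpetEta 48 1 ≤ 49 / 50 := by
  refine Filter.limsup_le_of_le (by isBoundedDefault) ?_
  have hmem : (fun g : carpetGroup => carpetLength g.1) ⁻¹' {n | 132 ≤ n} ∈
      Filter.comap (fun g : carpetGroup => carpetLength g.1) Filter.atTop :=
    Filter.preimage_mem_comap (Filter.mem_atTop 132)
  filter_upwards [hmem] with g hg
  simp only [Set.mem_preimage, Set.mem_setOf_eq] at hg
  set L : ℕ := carpetLength g.1 with hLdef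
  have hL0 : (L : ℝ≥0∞) ≠ 0 := by
    simp only [ne_eq, Nat.cast_eq_zero]; omega
  -- finiteness
  have hterm : ∀ v ∈ (Finset.univ : Finset (Fin 1 → Fin 8)),
      (carpetLength (carpetSec g.1 (List.ofFn v)) : ℝ≥0∞) ^ (48:ℝ) ≠ ⊤ := by
    intro v _
    exact ENNReal.rpow_ne_top_of_nonneg (by norm_num) (ENNReal.natCast_ne_top _)
  have hsum_ne : (∑ v : Fin 1 → Fin 8,
      (carpetLength (carpetSec g.1 (List.ofFn v)) : ℝ≥0∞) ^ (48:ℝ)) ≠ ⊤ := by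
    rw [← lt_top_iff_ne_top]
    exact ENNReal.sum_lt_top.2 (fun v hv => lt_top_iff_ne_top.2 (hterm v hv))
  have hnum_ne : ((∑ v : Fin 1 → Fin 8,
      (carpetLength (carpetSec g.1 (List.ofFn v)) : ℝ≥0∞) ^ (48:ℝ)) ^ (1/(48:ℝ))) ≠ ⊤ :=
    ENNReal.rpow_ne_top_of_nonneg (by norm_num) hsum_ne
  have hfin : ((∑ v : Fin 1 → Fin 8,
      (carpetLength (carpetSec g.1 (List.ofFn v)) : ℝ≥0∞) ^ (48:ℝ)) ^ (1/(48:ℝ))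
        / (L : ℝ≥0∞)) ≠ ⊤ :=
    (ENNReal.div_lt_top hnum_ne hL0).ne
  rw [← ENNReal.toReal_le_toReal hfin (ENNReal.div_lt_top (by simp) (by norm_num)).ne]
  rw [ENNReal.toReal_div, ← ENNReal.toReal_rpow, ENNReal.toReal_sum hterm]
  have hcast : ∀ v : Fin 1 → Fin 8,
      (((carpetLength (carpetSec g.1 (List.ofFn v)) : ℝ≥0∞)) ^ (48:ℝ)).toReal
        = ((carpetLength (carpetSec g.1 (List.ofFn v)) : ℝ)) ^ (48:ℕ) := by
    intro v
    rw [← ENNReal.toReal_rpow, ENNReal.toReal_natCast]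
    rw [show (48:ℝ) = ((48:ℕ):ℝ) by norm_num, Real.rpow_natCast]
  simp only [hcast, ENNReal.toReal_natCast]
  have h4950 : ((49:ℝ≥0∞) / 50).toReal = 49/50 := by
    rw [ENNReal.toReal_div]
    norm_num
  rw [h4950, one_div]
  apply upper_real
  · exact_mod_cast hg
  · positivity
  · -- sum bound
    have hv : ∀ v : Fin 1 → Fin 8,
        ((carpetLength (carpetSec g.1 (List.ofFn v)) : ℝ)) ^ (48:ℕ)
          ≤ ((11 * (L:ℝ) + 12) / 12) ^ (48:ℕ) := by
      intro v
      have hofn : List.ofFn v = [v 0] := by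
        simp [List.ofFn_succ]
      have hb := sec_len_bound g.2 (v 0)
      rw [← hofn] at hb
      have hle : ((carpetLength (carpetSec g.1 (List.ofFn v)) : ℝ))
          ≤ (11 * (L:ℝ) + 12) / 12 := by
        rw [le_div_iff₀ (by norm_num : (0:ℝ) < 12)]
        have : (12 * carpetLength (carpetSec g.1 (List.ofFn v)) : ℝ)
            ≤ (11 * L + 12 : ℕ) := by exact_mod_cast hb
        push_cast at this
        linarith
      exact pow_le_pow_left₀ (by positivity) hle _
    calc ∑ v : Fin 1 → Fin 8, ((carpetLength (carpetSec g.1 (List.ofFn v)) : ℝ)) ^ (48:ℕ)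
        ≤ ∑ _v : Fin 1 → Fin 8, ((11 * (L:ℝ) + 12) / 12) ^ (48:ℕ) :=
          Finset.sum_le_sum (fun v _ => hv v)
      _ = 8 * ((11 * (L:ℝ) + 12) / 12) ^ (48:ℕ) := by
          rw [Finset.sum_const]
          simp [Fintype.card_pi]

lemma eta48_lt_one : carpetEta 48 1 < 1 :=
  lt_of_le_of_lt eta48_le (by
    rw [ENNReal.div_lt_iff (by norm_num) (by norm_num)]
    norm_num)

-- ===== lower bound: structure of powers of ac =====

def fAC : F8 := Gen.A.tf ∘ Gen.C.tf
def fCA : F8 := Gen.C.tf ∘ Gen.A.tf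

def acWord : ℕ → List Gen
  | 0 => []
  | m+1 => Gen.A :: Gen.C :: acWord m

def caWord : ℕ → List Gen
  | 0 => []
  | m+1 => Gen.C :: Gen.A :: caWord m

lemma val_acWord (m : ℕ) : val (acWord m) = fAC^[m] := by
  induction m with
  | zero => rfl
  | succ m ih =>
    rw [Function.iterate_succ']
    show Gen.A.tf ∘ (Gen.C.tf ∘ val (acWord m)) = fAC ∘ fAC^[m]
    rw [ih]; rfl

lemma val_caWord (m : ℕ) : val (caWord m) = fCA^[m] := by
  induction m with
  | zero => rfl
  | succ m ih =>
    rw [Function.iterate_succ']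
    show Gen.C.tf ∘ (Gen.A.tf ∘ val (caWord m)) = fCA ∘ fCA^[m]
    rw [ih]; rfl

lemma acWord_length (m : ℕ) : (acWord m).length = 2 * m := by
  induction m with
  | zero => rfl
  | succ m ih => simp [acWord, ih]; omega

lemma caWord_length (m : ℕ) : (caWord m).length = 2 * m := by
  induction m with
  | zero => rfl
  | succ m ih => simp [caWord, ih]; omega

lemma fAC_mem (m : ℕ) : fAC^[m] ∈ carpetGroup := by
  rw [← val_acWord]; exact val_mem_group _
lemma fCA_mem (m : ℕ) : fCA^[m] ∈ carpetGroup := by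
  rw [← val_caWord]; exact val_mem_group _
lemma fAC_len (m : ℕ) : carpetLength (fAC^[m]) ≤ 2 * m := by
  rw [← val_acWord, ← acWord_length]; exact carpetLength_le _
lemma fCA_len (m : ℕ) : carpetLength (fCA^[m]) ≤ 2 * m := by
  rw [← val_caWord, ← caWord_length]; exact carpetLength_le _

def acSec3 (x : Fin 8) : F8 :=
  if x = 3 then Gen.C.tf else if x = 4 then Gen.A.tf
    else if x = 1 ∨ x = 6 then fCA else fAC
def caSec3 (x : Fin 8) : F8 :=
  if x = 3 then Gen.C.tf else if x = 4 then Gen.A.tf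
    else if x = 1 ∨ x = 6 then fAC else fCA

lemma iterate_three (f : F8) : f^[3] = f ∘ f ∘ f := rfl

lemma ac3_struct (x : Fin 8) (w : List (Fin 8)) :
    fAC^[3] (x :: w) = x :: acSec3 x w := by
  rw [iterate_three]
  fin_cases x <;>
    simp (config := { decide := true }) [fAC, fCA, acSec3, Function.comp, tf_cons, Gen.act,
      Gen.prm, sigmaA, sigmaB, sigmaC, sigmaD, tf_tf]

lemma ca3_struct (x : Fin 8) (w : List (Fin 8)) :
    fCA^[3] (x :: w) = x :: caSec3 x w := by
  rw [iterate_three]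
  fin_cases x <;>
    simp (config := { decide := true }) [fAC, fCA, caSec3, Function.comp, tf_cons, Gen.act,
      Gen.prm, sigmaA, sigmaB, sigmaC, sigmaD, tf_tf]

lemma iter_cons {f : F8} {S : Fin 8 → F8} (h : ∀ x w, f (x :: w) = x :: S x w) :
    ∀ (m : ℕ) (x : Fin 8) (w : List (Fin 8)), f^[m] (x :: w) = x :: (S x)^[m] w := by
  intro m
  induction m with
  | zero => intro x w; rfl
  | succ m ih =>
    intro x w
    rw [Function.iterate_succ_apply', ih, h, Function.iterate_succ_apply']

lemma acPow_succ (k : ℕ) (x : Fin 8) (w : List (Fin 8)) :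
    fAC^[3^(k+1)] (x :: w) = x :: (acSec3 x)^[3^k] w := by
  rw [pow_succ', Function.iterate_mul]
  exact iter_cons ac3_struct (3^k) x w

lemma caPow_succ (k : ℕ) (x : Fin 8) (w : List (Fin 8)) :
    fCA^[3^(k+1)] (x :: w) = x :: (caSec3 x)^[3^k] w := by
  rw [pow_succ', Function.iterate_mul]
  exact iter_cons ca3_struct (3^k) x w

def IsPw (k : ℕ) (h : F8) : Prop := h = fAC^[3^k] ∨ h = fCA^[3^k]

def goodSet : Finset (Fin 8) := {0, 1, 2, 5, 6, 7}

lemma step_good {k : ℕ} {h : F8} (hp : IsPw (k+1) h) (x : Fin 8)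
    (hx : x ∈ goodSet) :
    ∃ h', IsPw k h' ∧ ∀ w, h (x :: w) = x :: h' w := by
  rcases hp with rfl | rfl
  · fin_cases hx
    · exact ⟨fAC^[3^k], Or.inl rfl, fun w => by rw [acPow_succ]; rfl⟩
    · exact ⟨fCA^[3^k], Or.inr rfl, fun w => by rw [acPow_succ]; rfl⟩
    · exact ⟨fAC^[3^k], Or.inl rfl, fun w => by rw [acPow_succ]; rfl⟩
    · exact ⟨fAC^[3^k], Or.inl rfl, fun w => by rw [acPow_succ]; rfl⟩
    · exact ⟨fCA^[3^k], Or.inr rfl, fun w => by rw [acPow_succ]; rfl⟩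
    · exact ⟨fAC^[3^k], Or.inl rfl, fun w => by rw [acPow_succ]; rfl⟩
  · fin_cases hx
    · exact ⟨fCA^[3^k], Or.inr rfl, fun w => by rw [caPow_succ]; rfl⟩
    · exact ⟨fAC^[3^k], Or.inl rfl, fun w => by rw [caPow_succ]; rfl⟩
    · exact ⟨fCA^[3^k], Or.inr rfl, fun w => by rw [caPow_succ]; rfl⟩
    · exact ⟨fCA^[3^k], Or.inr rfl, fun w => by rw [caPow_succ]; rfl⟩
    · exact ⟨fAC^[3^k], Or.inl rfl, fun w => by rw [caPow_succ]; rfl⟩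
    · exact ⟨fCA^[3^k], Or.inr rfl, fun w => by rw [caPow_succ]; rfl⟩

lemma sec_good : ∀ (v : List (Fin 8)), (∀ x ∈ v, x ∈ goodSet) →
    ∀ (k : ℕ) (h : F8), IsPw k h → v.length ≤ k →
    ∃ h', IsPw (k - v.length) h' ∧ ∀ w, h (v ++ w) = v ++ h' w := by
  intro v
  induction v with
  | nil =>
    intro _ k h hp _
    exact ⟨h, by simpa using hp, fun w => rfl⟩
  | cons x v ih =>
    intro hgood k h hp hlen
    cases k with
    | zero => simp at hlen
    | succ k' =>
      obtain ⟨h₁, hp₁, hstep⟩ := step_good hp x (hgood x (List.mem_cons_self))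
      have hvlen : v.length ≤ k' := by simpa using hlen
      obtain ⟨h', hp', hsec⟩ := ih (fun y hy => hgood y (List.mem_cons_of_mem _ hy)) k' h₁ hp₁ hvlen
      refine ⟨h', ?_, ?_⟩
      · have : k' + 1 - (x :: v).length = k' - v.length := by simp only [List.length_cons]; omega
        rw [this]; exact hp'
      · intro w
        show h (x :: (v ++ w)) = x :: (v ++ h' w)
        rw [hstep, hsec]

lemma isPw_nil {k : ℕ} {h : F8} (hp : IsPw k h) : h [] = [] := by
  rcases hp with rfl | rfl <;>
    exact Function.iterate_fixed (by rfl) _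

lemma isPw_zero_apply {h : F8} (hp : IsPw 0 h) : h [0] = [1] ∨ h [0] = [2] := by
  rcases hp with rfl | rfl
  · left; rfl
  · right; rfl

lemma isPw_moves {k : ℕ} {h : F8} (hp : IsPw k h) :
    h (List.replicate k 0 ++ [0]) = List.replicate k 0 ++ [1]
      ∨ h (List.replicate k 0 ++ [0]) = List.replicate k 0 ++ [2] := by
  have hgood : ∀ x ∈ List.replicate k (0 : Fin 8), x ∈ goodSet := by
    intro x hx
    rw [List.eq_of_mem_replicate hx]
    decide
  obtain ⟨h', hp', hsec⟩ := sec_good (List.replicate k 0) hgood k h hp (by simp)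
  rw [List.length_replicate, Nat.sub_self] at hp'
  rcases isPw_zero_apply hp' with h0 | h0
  · left; rw [hsec [0], h0]
  · right; rw [hsec [0], h0]

lemma isPw_fixes {k k' : ℕ} {h : F8} (hp : IsPw k' h) (hlt : k < k') :
    h (List.replicate k 0 ++ [0]) = List.replicate k 0 ++ [0] := by
  have : List.replicate k (0:Fin 8) ++ [0] = List.replicate (k+1) (0:Fin 8) := by
    rw [List.replicate_succ' ]
  rw [this]
  have hgood : ∀ x ∈ List.replicate (k+1) (0 : Fin 8), x ∈ goodSet := by
    intro x hx
    rw [List.eq_of_mem_replicate hx]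
    decide
  obtain ⟨h', hp', hsec⟩ := sec_good (List.replicate (k+1) 0) hgood k' h hp (by simp; omega)
  have := hsec []
  simp only [List.append_nil] at this
  rw [this, isPw_nil hp', List.append_nil]

lemma isPw_ne_id {k : ℕ} {h : F8} (hp : IsPw k h) : h ≠ id := by
  intro hid
  rcases isPw_moves hp with h0 | h0 <;> rw [hid] at h0 <;>
    · have := List.append_cancel_left h0
      simp at this

lemma fAC_injective : Function.Injective (fun k => fAC^[3^k]) := by
  intro k k' he'
  have he : fAC^[3^k] = fAC^[3^k'] := he'
  by_contra hne
  rcases Nat.lt_or_ge k k' with hlt | hge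
  · have h1 := isPw_moves (Or.inl rfl : IsPw k (fAC^[3^k]))
    have h2 := isPw_fixes (Or.inl rfl : IsPw k' (fAC^[3^k'])) hlt
    rw [← he] at h2
    rcases h1 with h1 | h1 <;> rw [h1] at h2 <;>
      · have := List.append_cancel_left h2
        simp at this
  · have hlt : k' < k := by omega
    have h1 := isPw_moves (Or.inl rfl : IsPw k' (fAC^[3^k']))
    have h2 := isPw_fixes (Or.inl rfl : IsPw k (fAC^[3^k])) hlt
    rw [he] at h2
    rcases h1 with h1 | h1 <;> rw [h1] at h2 <;>
      · have := List.append_cancel_left h2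
        simp at this

lemma fCA_injective : Function.Injective (fun k => fCA^[3^k]) := by
  intro k k' he'
  have he : fCA^[3^k] = fCA^[3^k'] := he'
  by_contra hne
  rcases Nat.lt_or_ge k k' with hlt | hge
  · have h1 := isPw_moves (Or.inr rfl : IsPw k (fCA^[3^k]))
    have h2 := isPw_fixes (Or.inr rfl : IsPw k' (fCA^[3^k'])) hlt
    rw [← he] at h2
    rcases h1 with h1 | h1 <;> rw [h1] at h2 <;>
      · have := List.append_cancel_left h2
        simp at this
  · have hlt : k' < k := by omega
    have h1 := isPw_moves (Or.inr rfl : IsPw k' (fCA^[3^k']))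
    have h2 := isPw_fixes (Or.inr rfl : IsPw k (fCA^[3^k])) hlt
    rw [he] at h2
    rcases h1 with h1 | h1 <;> rw [h1] at h2 <;>
      · have := List.append_cancel_left h2
        simp at this

noncomputable def Lmin (k : ℕ) : ℕ :=
  min (carpetLength (fAC^[3^k])) (carpetLength (fCA^[3^k]))

lemma Lmin_pos (k : ℕ) : 1 ≤ Lmin k := by
  have h1 := carpetLength_pos (fAC_mem (3^k)) (isPw_ne_id (Or.inl rfl : IsPw k _))
  have h2 := carpetLength_pos (fCA_mem (3^k)) (isPw_ne_id (Or.inr rfl : IsPw k _))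
  exact le_min h1 h2

lemma Lmin_le (k : ℕ) : Lmin k ≤ 2 * 3^k :=
  le_trans (min_le_left _ _) (fAC_len _)

lemma Lmin_le_isPw {k : ℕ} {h : F8} (hp : IsPw k h) : Lmin k ≤ carpetLength h := by
  rcases hp with rfl | rfl
  · exact min_le_left _ _
  · exact min_le_right _ _

lemma exists_Lmin_elem (k : ℕ) : ∃ h : F8, IsPw k h ∧ h ∈ carpetGroup ∧
    carpetLength h = Lmin k := by
  rcases min_cases (carpetLength (fAC^[3^k])) (carpetLength (fCA^[3^k])) with ⟨he, _⟩ | ⟨he, _⟩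
  · exact ⟨fAC^[3^k], Or.inl rfl, fAC_mem _, he.symm⟩
  · exact ⟨fCA^[3^k], Or.inr rfl, fCA_mem _, he.symm⟩

lemma eventually_Lmin_big (m : ℕ) : ∃ K : ℕ, ∀ k, K ≤ k → m ≤ Lmin k := by
  have hball := ball_finite m
  have hS1 : {k : ℕ | carpetLength (fAC^[3^k]) < m}.Finite := by
    refine Set.Finite.subset (Set.Finite.preimage (fAC_injective.injOn) hball) ?_
    intro k hk
    exact ⟨fAC_mem _, hk⟩
  have hS2 : {k : ℕ | carpetLength (fCA^[3^k]) < m}.Finite := by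
    refine Set.Finite.subset (Set.Finite.preimage (fCA_injective.injOn) hball) ?_
    intro k hk
    exact ⟨fCA_mem _, hk⟩
  obtain ⟨K, hK⟩ := (hS1.union hS2).bddAbove
  refine ⟨K + 1, fun k hk => ?_⟩
  have hk1 : k ∉ {k : ℕ | carpetLength (fAC^[3^k]) < m} ∪ {k : ℕ | carpetLength (fCA^[3^k]) < m} := by
    intro hmem
    have := hK hmem
    omega
  simp only [Set.mem_union, Set.mem_setOf_eq, not_or, not_lt] at hk1
  exact le_min hk1.1 hk1.2

-- ===== lower bound: the contradiction =====

lemma eta_extract {p : ℝ} {n : ℕ} (h : carpetEta p n < 1) :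
    ∃ a : ℝ≥0∞, a < 1 ∧ ∃ m₀ : ℕ, ∀ g : carpetGroup, m₀ ≤ carpetLength g.1 →
      (∑ v : Fin n → Fin 8, (carpetLength (carpetSec g.1 (List.ofFn v)) : ℝ≥0∞) ^ p) ^ (1/p)
        / (carpetLength g.1 : ℝ≥0∞) ≤ a := by
  rw [carpetEta, Filter.limsup_eq] at h
  obtain ⟨a, ha, halt⟩ := sInf_lt_iff.1 h
  simp only [Set.mem_setOf_eq, Filter.eventually_comap, Filter.eventually_atTop] at ha
  obtain ⟨m₀, hm⟩ := ha
  exact ⟨a, halt, m₀, fun g hg => hm (carpetLength g.1) hg g rfl⟩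

lemma carpetSec_isPw {k n : ℕ} {h : F8} (hpw : IsPw k h) (hn : n ≤ k)
    (v : Fin n → Fin 8) (hv : ∀ i, v i ∈ goodSet) :
    ∃ h', IsPw (k - n) h' ∧ carpetSec h (List.ofFn v) = h' := by
  have hgood : ∀ x ∈ List.ofFn v, x ∈ goodSet := by
    intro x hx
    rw [List.mem_ofFn] at hx
    obtain ⟨i, rfl⟩ := hx
    exact hv i
  obtain ⟨h', hp', hsec⟩ := sec_good (List.ofFn v) hgood k h hpw (by simp [List.length_ofFn]; omega)
  rw [List.length_ofFn] at hp'
  refine ⟨h', hp', ?_⟩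
  funext w
  show (h (List.ofFn v ++ w)).drop (List.ofFn v).length = h' w
  rw [hsec, List.drop_left]

lemma key_step {p : ℝ} (hp : 0 < p) {n : ℕ} {a : ℝ≥0∞} {m₀ : ℕ}
    (hb : ∀ g : carpetGroup, m₀ ≤ carpetLength g.1 →
      (∑ v : Fin n → Fin 8, (carpetLength (carpetSec g.1 (List.ofFn v)) : ℝ≥0∞) ^ p) ^ (1/p)
        / (carpetLength g.1 : ℝ≥0∞) ≤ a)
    {k : ℕ} (hk : n ≤ k) (hm : m₀ ≤ Lmin k) :
    (6:ℝ≥0∞) ^ ((n:ℝ)/p) * (Lmin (k-n) : ℝ≥0∞) ≤ a * (Lmin k : ℝ≥0∞) := by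
  obtain ⟨h, hpw, hmem, hlen⟩ := exists_Lmin_elem k
  set g : carpetGroup := ⟨h, hmem⟩ with hgdef
  have hlen' : carpetLength g.1 = Lmin k := hlen
  have hr := hb g (by rw [hlen']; exact hm)
  rw [hlen'] at hr
  set X : ℝ≥0∞ := (Lmin (k-n) : ℝ≥0∞) with hXdef
  -- sum lower bound
  have hsum : (6:ℝ≥0∞) ^ (n:ℕ) * X ^ p ≤
      ∑ v : Fin n → Fin 8, (carpetLength (carpetSec g.1 (List.ofFn v)) : ℝ≥0∞) ^ p := by
    set T : Finset (Fin n → Fin 8) := Fintype.piFinset (fun _ => goodSet) with hTdef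
    have hTcard : T.card = 6 ^ n := by
      rw [hTdef, Fintype.card_piFinset]
      have : goodSet.card = 6 := by decide
      simp [this]
    have hterm : ∀ v ∈ T, X ^ p ≤ (carpetLength (carpetSec g.1 (List.ofFn v)) : ℝ≥0∞) ^ p := by
      intro v hv
      have hvi : ∀ i, v i ∈ goodSet := fun i => (Fintype.mem_piFinset.1 hv) i
      obtain ⟨h', hp', hsec⟩ := carpetSec_isPw hpw hk v hvi
      have hle : Lmin (k-n) ≤ carpetLength (carpetSec g.1 (List.ofFn v)) := by
        show Lmin (k-n) ≤ carpetLength (carpetSec h (List.ofFn v))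
        rw [hsec]
        exact Lmin_le_isPw hp'
      rw [hXdef]
      exact ENNReal.rpow_le_rpow (by exact_mod_cast hle) hp.le
    calc (6:ℝ≥0∞) ^ (n:ℕ) * X ^ p = T.card • (X ^ p) := by
          rw [hTcard, nsmul_eq_mul]; push_cast; ring
      _ = ∑ _v ∈ T, X ^ p := by rw [Finset.sum_const]
      _ ≤ ∑ v ∈ T, (carpetLength (carpetSec g.1 (List.ofFn v)) : ℝ≥0∞) ^ p :=
          Finset.sum_le_sum hterm
      _ ≤ ∑ v : Fin n → Fin 8, (carpetLength (carpetSec g.1 (List.ofFn v)) : ℝ≥0∞) ^ p :=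
          Finset.sum_le_sum_of_subset (Finset.subset_univ T)
  -- take 1/p power
  have hroot : (6:ℝ≥0∞) ^ ((n:ℝ)/p) * X ≤
      (∑ v : Fin n → Fin 8, (carpetLength (carpetSec g.1 (List.ofFn v)) : ℝ≥0∞) ^ p) ^ (1/p) := by
    have h1 := ENNReal.rpow_le_rpow hsum (by positivity : (0:ℝ) ≤ 1/p)
    rw [ENNReal.mul_rpow_of_nonneg _ _ (by positivity : (0:ℝ) ≤ 1/p)] at h1
    rw [← ENNReal.rpow_natCast (6:ℝ≥0∞) n, ← ENNReal.rpow_mul, ← ENNReal.rpow_mul] at h1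
    rw [mul_one_div, mul_one_div, div_self hp.ne', ENNReal.rpow_one] at h1
    exact h1
  -- numerator ≤ a * L
  have hL0 : (Lmin k : ℝ≥0∞) ≠ 0 := by
    have := Lmin_pos k
    simp only [ne_eq, Nat.cast_eq_zero]
    omega
  have hLt : (Lmin k : ℝ≥0∞) ≠ ⊤ := ENNReal.natCast_ne_top _
  have hnum := (ENNReal.div_le_iff_le_mul (Or.inl hL0) (Or.inl hLt)).1 hr
  calc (6:ℝ≥0∞) ^ ((n:ℝ)/p) * X
      ≤ (∑ v : Fin n → Fin 8, (carpetLength (carpetSec g.1 (List.ofFn v)) : ℝ≥0∞) ^ p) ^ (1/p) :=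
        hroot
    _ ≤ a * (Lmin k : ℝ≥0∞) := hnum

lemma iterate_bound {p : ℝ} (hp : 0 < p) {n : ℕ} (hn : 1 ≤ n) {a : ℝ≥0∞} {m₀ K : ℕ}
    (hb : ∀ g : carpetGroup, m₀ ≤ carpetLength g.1 →
      (∑ v : Fin n → Fin 8, (carpetLength (carpetSec g.1 (List.ofFn v)) : ℝ≥0∞) ^ p) ^ (1/p)
        / (carpetLength g.1 : ℝ≥0∞) ≤ a)
    (hK : ∀ k, K ≤ k → m₀ ≤ Lmin k) :
    ∀ j : ℕ, ((6:ℝ≥0∞) ^ ((n:ℝ)/p)) ^ j * (Lmin K : ℝ≥0∞)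
      ≤ a ^ j * (Lmin (K + j*n) : ℝ≥0∞) := by
  intro j
  induction j with
  | zero => simp
  | succ j ih =>
    have hmul : (j+1)*n = j*n + n := by ring
    have hstep := key_step hp hb (k := K + (j+1)*n)
      (by omega) (hK _ (by omega))
    have hsub : K + (j+1)*n - n = K + j*n := by omega
    rw [hsub] at hstep
    calc ((6:ℝ≥0∞) ^ ((n:ℝ)/p)) ^ (j+1) * (Lmin K : ℝ≥0∞)
        = (6:ℝ≥0∞) ^ ((n:ℝ)/p) * (((6:ℝ≥0∞) ^ ((n:ℝ)/p)) ^ j * (Lmin K : ℝ≥0∞)) := by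
          ring
      _ ≤ (6:ℝ≥0∞) ^ ((n:ℝ)/p) * (a ^ j * (Lmin (K + j*n) : ℝ≥0∞)) :=
          mul_le_mul_right ih _
      _ = a ^ j * ((6:ℝ≥0∞) ^ ((n:ℝ)/p) * (Lmin (K + j*n) : ℝ≥0∞)) := by ring
      _ ≤ a ^ j * (a * (Lmin (K + (j+1)*n) : ℝ≥0∞)) := mul_le_mul_right hstep _
      _ = a ^ (j+1) * (Lmin (K + (j+1)*n) : ℝ≥0∞) := by ring

lemma no_small_p {p : ℝ} (hp : 0 < p) {n : ℕ} (hn : 1 ≤ n)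
    (heta : carpetEta p n < 1) (h36 : (3:ℝ≥0∞) ^ p < 6) : False := by
  obtain ⟨a, ha1, m₀, hb⟩ := eta_extract heta
  obtain ⟨K, hK⟩ := eventually_Lmin_big m₀
  set q : ℝ≥0∞ := (6:ℝ≥0∞) ^ ((n:ℝ)/p) with hqdef
  have hq0 : q ≠ 0 := (ENNReal.rpow_pos (by norm_num) (by norm_num)).ne'
  have hqt : q ≠ ⊤ := ENNReal.rpow_ne_top_of_nonneg (by positivity) (by norm_num)
  have hat : a ≠ ⊤ := ha1.ne_top
  -- 3^n < q
  have h3q : (3:ℝ≥0∞) ^ (n:ℕ) < q := by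
    have h1 : (3:ℝ≥0∞) < (6:ℝ≥0∞) ^ (1/p) := by
      have h2 := ENNReal.rpow_lt_rpow h36 (by positivity : (0:ℝ) < 1/p)
      rw [← ENNReal.rpow_mul, mul_one_div, div_self hp.ne', ENNReal.rpow_one] at h2
      exact h2
    calc (3:ℝ≥0∞) ^ (n:ℕ) < ((6:ℝ≥0∞) ^ (1/p)) ^ (n:ℕ) := by
          apply ENNReal.pow_lt_pow_left (by omega) h1
      _ = q := by
          rw [← ENNReal.rpow_natCast ((6:ℝ≥0∞) ^ (1/p)) n, ← ENNReal.rpow_mul]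
          rw [hqdef, one_div, inv_mul_eq_div]
  -- β < 1
  set β : ℝ≥0∞ := a * (3:ℝ≥0∞) ^ (n:ℕ) / q with hβdef
  have hβ1 : β < 1 := by
    rw [hβdef, ENNReal.div_lt_iff (Or.inl hq0) (Or.inl hqt), one_mul]
    calc a * (3:ℝ≥0∞) ^ (n:ℕ) ≤ 1 * (3:ℝ≥0∞) ^ (n:ℕ) := mul_le_mul_left ha1.le _
      _ = (3:ℝ≥0∞) ^ (n:ℕ) := one_mul _
      _ < q := h3q
  -- choose j with 2 * 3^K * β^j < 1
  have h2K : ((2:ℝ≥0∞) * 3 ^ K) ≠ 0 :=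
    mul_ne_zero (by norm_num) (pow_ne_zero _ (by norm_num))
  have h2Kt : ((2:ℝ≥0∞) * 3 ^ K) ≠ ⊤ := by
    exact ENNReal.mul_ne_top (by norm_num) (ENNReal.pow_ne_top (by norm_num))
  have htend := ENNReal.tendsto_pow_atTop_nhds_zero_of_lt_one hβ1
  have hev := htend.eventually_lt_const (by
    rwa [ENNReal.inv_pos] : (0:ℝ≥0∞) < ((2:ℝ≥0∞) * 3 ^ K)⁻¹)
  obtain ⟨j, hj⟩ := hev.exists
  -- main chain
  have hch := iterate_bound hp hn hb hK j
  have hup : (Lmin (K + j*n) : ℝ≥0∞) ≤ 2 * 3 ^ (K + j*n) := by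
    have := Lmin_le (K + j*n)
    calc (Lmin (K + j*n) : ℝ≥0∞) ≤ ((2 * 3 ^ (K + j*n) : ℕ) : ℝ≥0∞) := by exact_mod_cast this
      _ = 2 * 3 ^ (K + j*n) := by push_cast; ring
  have hLK1 : (1:ℝ≥0∞) ≤ (Lmin K : ℝ≥0∞) := by
    have := Lmin_pos K
    exact_mod_cast this
  have hβq : β * q = a * (3:ℝ≥0∞) ^ (n:ℕ) := ENNReal.div_mul_cancel hq0 hqt
  have hqj0 : q ^ j ≠ 0 := pow_ne_zero _ hq0
  have hqjt : q ^ j ≠ ⊤ := ENNReal.pow_ne_top hqt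
  have hmain : q ^ j ≤ (2 * 3 ^ K * β ^ j) * q ^ j := by
    calc q ^ j = q ^ j * 1 := (mul_one _).symm
      _ ≤ q ^ j * (Lmin K : ℝ≥0∞) := mul_le_mul_right hLK1 _
      _ ≤ a ^ j * (Lmin (K + j*n) : ℝ≥0∞) := hch
      _ ≤ a ^ j * (2 * 3 ^ (K + j*n)) := mul_le_mul_right hup _
      _ = (2 * 3 ^ K) * ((a * 3 ^ (n:ℕ)) ^ j) := by
          rw [pow_add, pow_mul, mul_pow]
          ring
      _ = (2 * 3 ^ K) * ((β * q) ^ j) := by rw [hβq]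
      _ = (2 * 3 ^ K * β ^ j) * q ^ j := by rw [mul_pow]; ring
  have hlt : (2 * 3 ^ K * β ^ j) * q ^ j < 1 * q ^ j := by
    apply ENNReal.mul_lt_mul_iff_left hqj0 hqjt |>.2
    calc 2 * 3 ^ K * β ^ j < 2 * 3 ^ K * (2 * 3 ^ K)⁻¹ := by
          apply ENNReal.mul_lt_mul_iff_right h2K h2Kt |>.2 hj
      _ = 1 := ENNReal.mul_inv_cancel h2K h2Kt
  rw [one_mul] at hlt
  exact absurd hmain (not_le.2 hlt)


/-- Section 6.3. The critical exponent of the Sierpiński carpet group is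
at least `log 6 / log 3`. -/
theorem carpet_critical_exponent_lower_bound :
    Real.log 6 / Real.log 3 ≤
      sInf {p : ℝ | 0 < p ∧ ∃ n : ℕ, 1 ≤ n ∧ carpetEta p n < 1} := by
  refine le_csInf ⟨(48:ℝ), ?_⟩ ?_
  · exact ⟨by norm_num, 1, le_rfl, eta48_lt_one⟩
  rintro p ⟨hp0, n, hn, heta⟩
  by_contra hcon
  push_neg at hcon
  apply no_small_p hp0 hn heta
  have hlog3 : 0 < Real.log 3 := Real.log_pos (by norm_num)
  have h1 : p * Real.log 3 < Real.log 6 := by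
    rw [lt_div_iff₀ hlog3] at hcon
    linarith
  have h2 : (3:ℝ) ^ p < 6 := by
    rw [Real.rpow_def_of_pos (by norm_num : (0:ℝ) < 3)]
    calc Real.exp (Real.log 3 * p) < Real.exp (Real.log 6) :=
        Real.exp_lt_exp.2 (by linarith)
      _ = 6 := Real.exp_log (by norm_num)
  have : ENNReal.ofReal ((3:ℝ) ^ p) < ENNReal.ofReal 6 :=
    (ENNReal.ofReal_lt_ofReal_iff (by norm_num)).2 h2
  rw [← ENNReal.ofReal_rpow_of_pos (by norm_num : (0:ℝ) < 3)] at this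
  have e3 : ENNReal.ofReal (3:ℝ) = (3:ℝ≥0∞) := by
    norm_num
  have e6 : ENNReal.ofReal (6:ℝ) = (6:ℝ≥0∞) := by
    norm_num
  rwa [e3, e6] at this
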